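/- Let X be a unital C*-algebra with rr(X) = 0 and 0 < K ≤ 1. Then br_K(X) = 0, i.e., every self-adjoint element of X can be approximated in norm by self-adjoint elements y such that for every rational δ > 0 there is a self-adjoint z with ‖y − z‖ ≤ δ, z² invertible, and ‖(z²)^{-1}‖ ≤ 1/(K·δ²). -/

import Mathlib

/-- If `X` has real rank zero (every self-adjoint element is a norm limit of invertible
self-adjoint elements) and `0 < K ≤ 1`, then `br_K(X) = 0`: every self-adjoint element can
be approximated by self-adjoint `y` such that for each rational `δ > 0` there is a
self-adjoint `z` with `‖y - z‖ ≤ δ`, `z²` invertible and `‖(z²)⁻¹‖ ≤ 1/(K·δ²)`. -/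
theorem stmt_9 {X : Type*} [CStarAlgebra X] (K : ℝ) (hK0 : 0 < K) (hK1 : K ≤ 1)
    (hrr : ∀ x : X, IsSelfAdjoint x → ∀ ε : ℝ, 0 < ε →
      ∃ y : X, IsSelfAdjoint y ∧ IsUnit y ∧ ‖x - y‖ < ε) :
    ∀ x : X, IsSelfAdjoint x → ∀ ε : ℝ, 0 < ε →
      ∃ y : X, IsSelfAdjoint y ∧ (∀ δ : ℚ, 0 < δ →
        ∃ z : X, IsSelfAdjoint z ∧ ‖y - z‖ ≤ (δ : ℝ) ∧
          ∃ b : X, z ^ 2 * b = 1 ∧ b * z ^ 2 = 1 ∧ ‖b‖ ≤ 1 / (K * (δ : ℝ) ^ 2)) ∧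
      ‖x - y‖ < ε := by
  intro x hx ε hε
  obtain ⟨y, hy, hyu, hxy⟩ := hrr x hx ε hε
  refine ⟨y, hy, ?_, hxy⟩
  intro δq hδq
  set δ : ℝ := (δq : ℝ) with hδdef
  have hδ : 0 < δ := by rw [hδdef]; exact_mod_cast hδq
  have h0 : (0 : ℝ) ∉ spectrum ℝ y := spectrum.zero_notMem ℝ hyu
  have hne : ∀ t ∈ spectrum ℝ y, t ≠ 0 := fun t ht h => h0 (h ▸ ht)
  set g : ℝ → ℝ := fun t => t * max 1 (δ / |t|) with hg
  have hgc : ContinuousOn g (spectrum ℝ y) := by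
    apply continuousOn_id.mul
    exact continuousOn_const.sup (continuousOn_const.div continuous_abs.continuousOn
      (fun t ht => abs_ne_zero.mpr (hne t ht)))
  have hgabs : ∀ t, t ≠ 0 → |g t| = max |t| δ := by
    intro t ht
    have habs : (0:ℝ) < |t| := abs_pos.mpr ht
    rw [hg]
    simp only [abs_mul, abs_of_pos (lt_max_of_lt_left one_pos : (0:ℝ) < max 1 (δ / |t|))]
    rw [mul_max_of_nonneg _ _ habs.le, mul_one, mul_div_cancel₀ _ habs.ne']
  have hgsq : ∀ t ∈ spectrum ℝ y, δ ^ 2 ≤ g t ^ 2 := by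
    intro t ht
    rw [← sq_abs (g t), hgabs t (hne t ht)]
    exact pow_le_pow_left₀ hδ.le (le_max_right _ _) 2
  have hgne : ∀ t ∈ spectrum ℝ y, g t ^ 2 ≠ 0 := by
    intro t ht
    exact ne_of_gt (lt_of_lt_of_le (by positivity) (hgsq t ht))
  set z : X := cfc g y with hz
  have hzsa : IsSelfAdjoint z := cfc_predicate g y
  refine ⟨z, hzsa, ?_, ?_⟩
  · have : y - z = cfc (fun t => t - g t) y := by
      rw [cfc_sub (fun t : ℝ => t) g y (continuousOn_id) hgc, cfc_id' ℝ y]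
    rw [this]
    apply norm_cfc_le hδ.le
    intro t ht
    have ht0 := hne t ht
    have habs : (0:ℝ) < |t| := abs_pos.mpr ht0
    have h1 : |t - g t| = max |t| δ - |t| := by
      rw [hg]
      have : t - t * max 1 (δ / |t|) = -(t * (max 1 (δ / |t|) - 1)) := by ring
      rw [this, abs_neg, abs_mul,
        abs_of_nonneg (by simp : (0:ℝ) ≤ max 1 (δ / |t|) - 1),
        mul_sub, mul_one, mul_max_of_nonneg _ _ habs.le, mul_one,
        mul_div_cancel₀ _ habs.ne']
    rw [Real.norm_eq_abs, h1]
    have : max |t| δ ≤ |t| + δ := max_le (le_add_of_nonneg_right hδ.le) (le_add_of_nonneg_left habs.le)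
    linarith
  · set b : X := cfc (fun t => (g t ^ 2)⁻¹) y with hb
    have hbc : ContinuousOn (fun t => (g t ^ 2)⁻¹) (spectrum ℝ y) :=
      (hgc.pow 2).inv₀ hgne
    have hmul : z ^ 2 * b = 1 := by
      rw [hz, ← cfc_pow g 2 y hgc, ← cfc_mul (fun t => g t ^ 2) (fun t => (g t ^ 2)⁻¹) y (hgc.pow 2) hbc]
      rw [show (fun t => g t ^ 2 * (g t ^ 2)⁻¹) = fun t : ℝ =>
        if g t ^ 2 = 0 then 0 else 1 from ?_]
      · calc cfc (fun t : ℝ => if g t ^ 2 = 0 then (0:ℝ) else 1) y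
            = cfc (1 : ℝ → ℝ) y := by
              apply cfc_congr
              intro t ht
              simp [hgne t ht]
          _ = 1 := cfc_one ℝ y
      · ext t
        by_cases h : g t ^ 2 = 0 <;> simp [h, mul_inv_cancel₀]
    have hmul' : b * z ^ 2 = 1 := by
      rw [hz, ← cfc_pow g 2 y hgc, hb, ← cfc_mul (fun t => (g t ^ 2)⁻¹) (fun t => g t ^ 2) y hbc (hgc.pow 2)]
      · rw [show (fun t => (g t ^ 2)⁻¹ * g t ^ 2) = fun t : ℝ =>
          if g t ^ 2 = 0 then 0 else 1 from ?_]
        · calc cfc (fun t : ℝ => if g t ^ 2 = 0 then (0:ℝ) else 1) y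
              = cfc (1 : ℝ → ℝ) y := by
                apply cfc_congr
                intro t ht
                simp [hgne t ht]
            _ = 1 := cfc_one ℝ y
        · ext t
          by_cases h : g t ^ 2 = 0 <;> simp [h, inv_mul_cancel₀]
    refine ⟨b, hmul, hmul', ?_⟩
    have hKδ : 0 < K * δ ^ 2 := by positivity
    apply norm_cfc_le (by positivity)
    intro t ht
    rw [Real.norm_eq_abs, abs_of_nonneg (by positivity)]
    rw [one_div]
    apply inv_anti₀ hKδ
    calc K * δ ^ 2 ≤ 1 * δ ^ 2 := by nlinarith
      _ = δ ^ 2 := one_mul _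
      _ ≤ g t ^ 2 := hgsq t ht
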